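/- Let G be an infinite, finitely generated group. Then for every finite symmetric generating set Σ of G (with Σ = Σ⁻¹ and identity ∉ Σ), the roundness of the metric space (G, d_Σ), where d_Σ is the word metric associated to Σ, lies in the interval [1, 2]. In other words, the roundness spectrum ρ(G) is contained in [1, 2]. -/

import Mathlib

/-- The set of exponents `q ≥ 1` for which the roundness inequality holds for all
quadruples of points, with respect to the distance function `d`. -/
noncomputable def roundnessSet {X : Type*} (d : X → X → ℝ) : Set ℝ :=
  {q : ℝ | 1 ≤ q ∧ ∀ x00 x01 x10 x11 : X,
    d x00 x11 ^ q + d x01 x10 ^ q ≤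
      d x00 x01 ^ q + d x00 x10 ^ q + d x11 x01 ^ q + d x11 x10 ^ q}

/-- The roundness of a distance function `d` on `X`: the supremum (in `EReal`) of all
exponents `q ≥ 1` for which the roundness inequality holds for all quadruples. -/
noncomputable def roundness {X : Type*} (d : X → X → ℝ) : EReal :=
  sSup ((fun q : ℝ => (q : EReal)) '' roundnessSet d)
/-- The word length of `g` with respect to a generating set `S`:
the least `n` such that `g` is a product of `n` elements of `S`. -/
noncomputable def wordLength {G : Type*} [Group G] (S : Set G) (g : G) : ℕ :=
  sInf {n : ℕ | ∃ l : List G, l.length = n ∧ (∀ x ∈ l, x ∈ S) ∧ l.prod = g}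

/-- The word metric on a group `G` associated to a generating set `S`. -/
noncomputable def wordDist {G : Type*} [Group G] (S : Set G) (g h : G) : ℝ :=
  wordLength S (g⁻¹ * h)

section Aux

variable {G : Type*} [Group G] {S : Set G}

lemma wordSet_nonempty (hsym : ∀ s ∈ S, s⁻¹ ∈ S) (hgen : Subgroup.closure S = ⊤) (g : G) :
    {n : ℕ | ∃ l : List G, l.length = n ∧ (∀ x ∈ l, x ∈ S) ∧ l.prod = g}.Nonempty := by
  have hg : g ∈ Submonoid.closure (S ∪ S⁻¹) := by
    rw [← Subgroup.closure_toSubmonoid, hgen]; trivial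
  obtain ⟨l, hl, hp⟩ := Submonoid.exists_list_of_mem_closure hg
  refine ⟨l.length, l, rfl, fun x hx => ?_, hp⟩
  rcases hl x hx with h | h
  · exact h
  · simpa using hsym _ h

lemma wordLength_le {g : G} {n : ℕ} (l : List G) (hlen : l.length = n)
    (hmem : ∀ x ∈ l, x ∈ S) (hp : l.prod = g) : wordLength S g ≤ n :=
  Nat.sInf_le ⟨l, hlen, hmem, hp⟩

lemma exists_list_wordLength (hsym : ∀ s ∈ S, s⁻¹ ∈ S) (hgen : Subgroup.closure S = ⊤)
    (g : G) : ∃ l : List G, l.length = wordLength S g ∧ (∀ x ∈ l, x ∈ S) ∧ l.prod = g :=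
  Nat.sInf_mem (wordSet_nonempty hsym hgen g)

lemma wordLength_one : wordLength S (1 : G) = 0 :=
  Nat.le_zero.mp (wordLength_le ([] : List G) rfl (by simp) (by simp))

lemma eq_one_of_wordLength_eq_zero (hsym : ∀ s ∈ S, s⁻¹ ∈ S)
    (hgen : Subgroup.closure S = ⊤) {g : G} (h : wordLength S g = 0) : g = 1 := by
  obtain ⟨l, hlen, _, hp⟩ := exists_list_wordLength hsym hgen g
  rw [h, List.length_eq_zero_iff] at hlen
  simpa [hlen] using hp.symm

lemma wordLength_mul_le (hsym : ∀ s ∈ S, s⁻¹ ∈ S) (hgen : Subgroup.closure S = ⊤)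
    (g h : G) : wordLength S (g * h) ≤ wordLength S g + wordLength S h := by
  obtain ⟨l1, hl1, hm1, hp1⟩ := exists_list_wordLength hsym hgen g
  obtain ⟨l2, hl2, hm2, hp2⟩ := exists_list_wordLength hsym hgen h
  refine wordLength_le (l1 ++ l2) (by simp [hl1, hl2]) ?_ (by simp [hp1, hp2])
  intro x hx
  rcases List.mem_append.mp hx with h | h
  · exact hm1 x h
  · exact hm2 x h

lemma wordLength_inv (hsym : ∀ s ∈ S, s⁻¹ ∈ S) (hgen : Subgroup.closure S = ⊤)
    (g : G) : wordLength S g⁻¹ = wordLength S g := by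
  have key : ∀ a : G, wordLength S a⁻¹ ≤ wordLength S a := by
    intro a
    obtain ⟨l, hl, hm, hp⟩ := exists_list_wordLength hsym hgen a
    refine wordLength_le ((l.map fun x => x⁻¹).reverse) (by simp [hl]) ?_ ?_
    · intro x hx
      simp only [List.mem_reverse, List.mem_map] at hx
      obtain ⟨y, hy, rfl⟩ := hx
      exact hsym y (hm y hy)
    · rw [← List.prod_inv_reverse, hp]
  exact le_antisymm (key g) (by simpa using key g⁻¹)

lemma wordDist_symm (hsym : ∀ s ∈ S, s⁻¹ ∈ S) (hgen : Subgroup.closure S = ⊤)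
    (g h : G) : wordDist S g h = wordDist S h g := by
  unfold wordDist
  rw [show h⁻¹ * g = (g⁻¹ * h)⁻¹ by group, wordLength_inv hsym hgen]

lemma wordDist_triangle (hsym : ∀ s ∈ S, s⁻¹ ∈ S) (hgen : Subgroup.closure S = ⊤)
    (g h k : G) : wordDist S g k ≤ wordDist S g h + wordDist S h k := by
  unfold wordDist
  rw [show g⁻¹ * k = (g⁻¹ * h) * (h⁻¹ * k) by group]
  exact_mod_cast wordLength_mul_le hsym hgen _ _

end Aux

/-- For an infinite, finitely generated group `G`, the roundness of every Cayley graph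
of `G` lies in the interval `[1, 2]`: for every finite symmetric generating set `S`
not containing the identity, the roundness of the word metric `d_S` is in `[1, 2]`. -/
theorem roundness_spectrum_subset_Icc (G : Type*) [Group G] [Infinite G] [Group.FG G]
    (S : Set G) (hfin : S.Finite) (hsym : ∀ s ∈ S, s⁻¹ ∈ S) (h1 : (1 : G) ∉ S)
    (hgen : Subgroup.closure S = ⊤) :
    roundness (wordDist S) ∈ Set.Icc (1 : EReal) 2 := by
  -- 1 belongs to the roundness set (triangle inequality argument)
  have hone : (1 : ℝ) ∈ roundnessSet (wordDist S) := by
    refine ⟨le_refl _, fun a b c e => ?_⟩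
    simp only [Real.rpow_one]
    have t1 : wordDist S a e ≤ wordDist S a b + wordDist S b e :=
      wordDist_triangle hsym hgen a b e
    have t2 : wordDist S a e ≤ wordDist S a c + wordDist S c e :=
      wordDist_triangle hsym hgen a c e
    have t3 : wordDist S b c ≤ wordDist S b a + wordDist S a c :=
      wordDist_triangle hsym hgen b a c
    have t4 : wordDist S b c ≤ wordDist S b e + wordDist S e c :=
      wordDist_triangle hsym hgen b e c
    have s1 : wordDist S b e = wordDist S e b := wordDist_symm hsym hgen b e
    have s2 : wordDist S c e = wordDist S e c := wordDist_symm hsym hgen c e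
    have s3 : wordDist S b a = wordDist S a b := wordDist_symm hsym hgen b a
    linarith
  -- there exist s, t ∈ S with s*t ∉ S and s*t ≠ 1
  obtain ⟨s, hs, t, ht, hst_not, hst_ne⟩ :
      ∃ s ∈ S, ∃ t ∈ S, s * t ∉ S ∧ s * t ≠ 1 := by
    by_contra hcon
    push_neg at hcon
    have hsub : ∀ a ∈ S, ∀ b ∈ S, a * b ∈ S ∪ {1} := by
      intro a ha b hb
      by_cases h : a * b ∈ S
      · exact Or.inl h
      · exact Or.inr (hcon a ha b hb h)
    set H : Subgroup G :=
      { carrier := S ∪ {1}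
        one_mem' := Or.inr rfl
        mul_mem' := by
          rintro a b (ha | ha) (hb | hb)
          · exact hsub a ha b hb
          · simp only [Set.mem_singleton_iff] at hb; simp [hb, ha]
          · simp only [Set.mem_singleton_iff] at ha; simp [ha, hb]
          · simp only [Set.mem_singleton_iff] at ha hb; simp [ha, hb]
        inv_mem' := by
          rintro a (ha | ha)
          · exact Or.inl (hsym a ha)
          · simp only [Set.mem_singleton_iff] at ha; simp [ha] } with hH
    have hle : Subgroup.closure S ≤ H := Subgroup.closure_le H |>.mpr (fun x hx => Or.inl hx)
    rw [hgen, top_le_iff] at hle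
    have : (Set.univ : Set G).Finite := by
      have : (Set.univ : Set G) ⊆ S ∪ {1} := by
        intro x _
        have : x ∈ H := hle ▸ Subgroup.mem_top x
        exact this
      exact ((hfin.union (Set.finite_singleton 1)).subset this)
    exact Set.infinite_univ this
  have hs1 : s ≠ 1 := fun h => h1 (h ▸ hs)
  have ht1 : t ≠ 1 := fun h => h1 (h ▸ ht)
  -- word lengths
  have hws : wordLength S s = 1 := by
    refine le_antisymm (wordLength_le [s] rfl (by simpa using hs) (by simp)) ?_
    rcases Nat.eq_zero_or_pos (wordLength S s) with h | h
    · exact absurd (eq_one_of_wordLength_eq_zero hsym hgen h) hs1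
    · exact h
  have hwst : wordLength S (s * t) = 2 := by
    refine le_antisymm (wordLength_le [s, t] rfl (by simp [hs, ht]) (by simp)) ?_
    have h0 : wordLength S (s * t) ≠ 0 := fun h =>
      hst_ne (eq_one_of_wordLength_eq_zero hsym hgen h)
    have h1' : wordLength S (s * t) ≠ 1 := by
      intro h
      obtain ⟨l, hlen, hm, hp⟩ := exists_list_wordLength hsym hgen (s * t)
      rw [h, List.length_eq_one_iff] at hlen
      obtain ⟨x, rfl⟩ := hlen
      simp only [List.prod_cons, List.prod_nil, mul_one] at hp
      exact hst_not (hp ▸ hm x (by simp))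
    omega
  -- key distances
  have d1 : wordDist S 1 (s * t) = 2 := by
    unfold wordDist; rw [inv_one, one_mul, hwst]; norm_num
  have d2 : wordDist S s s = 0 := by
    unfold wordDist; rw [inv_mul_cancel, wordLength_one]; norm_num
  have d3 : wordDist S 1 s = 1 := by
    unfold wordDist; rw [inv_one, one_mul, hws]; norm_num
  have d4 : wordDist S (s * t) s = 1 := by
    unfold wordDist
    rw [show (s * t)⁻¹ * s = t⁻¹ by group]
    rw [wordLength_inv hsym hgen]
    have : wordLength S t = 1 := by
      refine le_antisymm (wordLength_le [t] rfl (by simpa using ht) (by simp)) ?_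
      rcases Nat.eq_zero_or_pos (wordLength S t) with h | h
      · exact absurd (eq_one_of_wordLength_eq_zero hsym hgen h) ht1
      · exact h
    rw [this]; norm_num
  -- every q in the roundness set is ≤ 2
  have hbound : ∀ q ∈ roundnessSet (wordDist S), q ≤ 2 := by
    rintro q ⟨hq1, hq⟩
    have hineq := hq 1 s s (s * t)
    rw [d1, d2, d3, d4] at hineq
    have hq0 : q ≠ 0 := by linarith
    rw [Real.zero_rpow hq0, Real.one_rpow] at hineq
    have h2q : (2 : ℝ) ^ q ≤ (2 : ℝ) ^ (2 : ℝ) := by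
      rw [show (2:ℝ) ^ (2:ℝ) = 4 by
        rw [show (2:ℝ) = ((2:ℕ):ℝ) by norm_num, Real.rpow_natCast]; norm_num]
      linarith
    exact (Real.rpow_le_rpow_left_iff (by norm_num : (1:ℝ) < 2)).mp h2q
  constructor
  · refine le_sSup ⟨1, hone, ?_⟩
    norm_num
  · refine sSup_le ?_
    rintro x ⟨q, hq, rfl⟩
    have := hbound q hq
    show (q : EReal) ≤ 2
    rw [show (2 : EReal) = ((2 : ℝ) : EReal) from rfl]
    exact EReal.coe_le_coe_iff.mpr this
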